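/- Let C be a natural number, let T be an invertible C×C real matrix, let p : Fin C → ℝ, let p̃ = T·p (matrix–vector product), and let l : Fin C → ℝ. Then Σ_{ỹ} p̃(ỹ) · (Σ_{k} l(k) · (T⁻¹)_{k,ỹ}) = Σ_{k} p(k) · l(k). -/
import Mathlib


/-- **Consistency of the Backward risk.** For an invertible `C × C` real transition matrix `T`,
clean label distribution `p`, noisy label distribution `ptil = T·p`, and per-class losses `l`,
the Backward risk `∑ ỹ, ptil ỹ * (l ᵥ* T⁻¹) ỹ` equals the clean risk `∑ k, p k * l k`. -/
theorem backward_risk_consistency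
    (C : ℕ) (T : Matrix (Fin C) (Fin C) ℝ) (hT : IsUnit T)
    (p ptil : Fin C → ℝ) (hptil : ptil = T.mulVec p)
    (l : Fin C → ℝ) :
    ∑ ytil, ptil ytil * (∑ k, l k * T⁻¹ k ytil) = ∑ k, p k * l k := by
  have hinv : T⁻¹.mulVec ptil = p := by
    rw [hptil, Matrix.mulVec_mulVec, Matrix.nonsing_inv_mul T
      ((Matrix.isUnit_iff_isUnit_det T).mp hT), Matrix.one_mulVec]
  calc ∑ ytil, ptil ytil * (∑ k, l k * T⁻¹ k ytil)
      = ∑ k, l k * ∑ ytil, T⁻¹ k ytil * ptil ytil := by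
        simp only [Finset.mul_sum]
        rw [Finset.sum_comm]
        exact Finset.sum_congr rfl fun k _ => Finset.sum_congr rfl fun y _ => by ring
    _ = ∑ k, p k * l k := by
        have : ∀ k, ∑ ytil, T⁻¹ k ytil * ptil ytil = p k := fun k => by
          rw [← hinv]; rfl
        simp only [this]
        exact Finset.sum_congr rfl fun k _ => mul_comm _ _
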